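/- For all reals c and all Δ > 0, lim_{k→∞} Σ_{i=1}^{k} ( φ(c + (2i+1)Δ/(2k)) − φ(c + (2i−1)Δ/(2k)) )² / ( Φ(c + (2i+1)Δ/(2k)) − Φ(c + (2i−1)Δ/(2k)) ) = c·φ(c) − (c+Δ)·φ(c+Δ) + Φ(c+Δ) − Φ(c). -/

import Mathlib

open MeasureTheory Real Filter

/-- Standard Gaussian density. -/
noncomputable def phi (x : ℝ) : ℝ := (Real.sqrt (2 * Real.pi))⁻¹ * Real.exp (-(x ^ 2) / 2)

/-- Standard Gaussian cumulative distribution function. -/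
noncomputable def Phi (x : ℝ) : ℝ := ∫ t in Set.Iic x, phi t

@[fun_prop]
lemma continuous_phi : Continuous phi := by
  unfold phi; fun_prop

lemma phi_pos (x : ℝ) : 0 < phi x := by
  unfold phi
  have h2π : (0:ℝ) < Real.sqrt (2 * Real.pi) :=
    Real.sqrt_pos.mpr (by positivity)
  positivity

lemma hasDerivAt_phi (x : ℝ) : HasDerivAt phi (-x * phi x) x := by
  have h1 : HasDerivAt (fun y : ℝ => -(y ^ 2) / 2) (-x) x := by
    have := ((hasDerivAt_pow 2 x).neg.div_const 2 : HasDerivAt (fun y : ℝ => -(y ^ 2) / 2) _ x)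
    refine this.congr_deriv ?_
    norm_num
    ring
  have h2 := (h1.exp).const_mul ((Real.sqrt (2 * Real.pi))⁻¹)
  have h3 : -x * phi x
      = (Real.sqrt (2 * Real.pi))⁻¹ * (Real.exp (-(x ^ 2) / 2) * -x) := by
    unfold phi; ring
  rw [h3]
  exact h2

lemma integrable_phi : Integrable phi := by
  have h : Integrable (fun x : ℝ => Real.exp (-(1/2 : ℝ) * x ^ 2)) :=
    integrable_exp_neg_mul_sq (by norm_num)
  have := h.const_mul ((Real.sqrt (2 * Real.pi))⁻¹)
  refine this.congr ?_
  filter_upwards with x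
  unfold phi
  ring_nf

lemma Phi_sub (a b : ℝ) : Phi b - Phi a = ∫ t in a..b, phi t :=
  intervalIntegral.integral_Iic_sub_Iic integrable_phi.integrableOn integrable_phi.integrableOn

lemma continuous_Phi : Continuous Phi := by
  have h : Phi = fun x => Phi 0 + ∫ t in (0:ℝ)..x, phi t := by
    funext x
    rw [← Phi_sub 0 x]; ring
  rw [h]
  exact continuous_const.add
    (intervalIntegral.continuous_primitive (fun a b => continuous_phi.intervalIntegrable a b) 0)

lemma integral_tphi (a b : ℝ) : ∫ t in a..b, t * phi t = phi a - phi b := by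
  have key : ∀ x ∈ Set.uIcc a b, HasDerivAt (fun y : ℝ => -phi y) (x * phi x) x := by
    intro x _
    exact ((hasDerivAt_phi x).neg : HasDerivAt (fun y : ℝ => -phi y) _ x).congr_deriv (by ring)
  have h := intervalIntegral.integral_eq_sub_of_hasDerivAt key
    (Continuous.intervalIntegrable (by fun_prop) a b)
  rw [h]; ring

lemma integral_t2phi (a b : ℝ) :
    ∫ t in a..b, t ^ 2 * phi t = (Phi b - b * phi b) - (Phi a - a * phi a) := by
  have key : ∀ x ∈ Set.uIcc a b,
      HasDerivAt (fun y : ℝ => -(y * phi y)) (x ^ 2 * phi x - phi x) x := by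
    intro x _
    have h1 := (((hasDerivAt_id x).mul (hasDerivAt_phi x)).neg :
      HasDerivAt (fun y : ℝ => -(y * phi y)) _ x)
    refine h1.congr_deriv ?_
    simp only [id_eq]
    ring
  have hint : IntervalIntegrable (fun t : ℝ => t ^ 2 * phi t - phi t) volume a b :=
    Continuous.intervalIntegrable (by fun_prop) a b
  have h := intervalIntegral.integral_eq_sub_of_hasDerivAt key hint
  have hsub : (∫ t in a..b, (t ^ 2 * phi t - phi t))
      = (∫ t in a..b, t ^ 2 * phi t) - ∫ t in a..b, phi t :=
    intervalIntegral.integral_sub (Continuous.intervalIntegrable (by fun_prop) a b)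
      (Continuous.intervalIntegrable (by fun_prop) a b)
  rw [hsub] at h
  have hP := Phi_sub a b
  rw [← hP] at h
  linarith

lemma expand_integral (a b lam : ℝ) :
    ∫ t in a..b, (t - lam) ^ 2 * phi t
      = (∫ t in a..b, t ^ 2 * phi t) - 2 * lam * (∫ t in a..b, t * phi t)
        + lam ^ 2 * (∫ t in a..b, phi t) := by
  have heq : ∀ t : ℝ, (t - lam) ^ 2 * phi t
      = t ^ 2 * phi t - 2 * lam * (t * phi t) + lam ^ 2 * phi t := fun t => by ring
  simp_rw [heq]
  have i1 : IntervalIntegrable (fun t : ℝ => t ^ 2 * phi t - 2 * lam * (t * phi t))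
      volume a b := Continuous.intervalIntegrable (by fun_prop) a b
  have i2 : IntervalIntegrable (fun t : ℝ => lam ^ 2 * phi t) volume a b :=
    Continuous.intervalIntegrable (by fun_prop) a b
  have i3 : IntervalIntegrable (fun t : ℝ => t ^ 2 * phi t) volume a b :=
    Continuous.intervalIntegrable (by fun_prop) a b
  have i4 : IntervalIntegrable (fun t : ℝ => 2 * lam * (t * phi t)) volume a b :=
    Continuous.intervalIntegrable (by fun_prop) a b
  rw [intervalIntegral.integral_add i1 i2, intervalIntegral.integral_sub i3 i4,
    intervalIntegral.integral_const_mul, intervalIntegral.integral_const_mul]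

lemma term_bounds (a b : ℝ) (hab : a < b) :
    ((Phi b - b * phi b) - (Phi a - a * phi a)) - (b - a) ^ 2 / 4 * (Phi b - Phi a)
      ≤ (phi b - phi a) ^ 2 / (Phi b - Phi a) ∧
    (phi b - phi a) ^ 2 / (Phi b - Phi a) ≤ (Phi b - b * phi b) - (Phi a - a * phi a) := by
  set P : ℝ := ∫ t in a..b, phi t with hPdef
  set M : ℝ := ∫ t in a..b, t * phi t with hMdef
  set Q : ℝ := ∫ t in a..b, t ^ 2 * phi t with hQdef
  have hP : 0 < P :=
    intervalIntegral.intervalIntegral_pos_of_pos (continuous_phi.intervalIntegrable a b)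
      phi_pos hab
  have hPhiP : Phi b - Phi a = P := Phi_sub a b
  have hphiM : phi b - phi a = -M := by
    rw [hMdef, integral_tphi]; ring
  have hQF : Q = (Phi b - b * phi b) - (Phi a - a * phi a) := integral_t2phi a b
  rw [hPhiP, hphiM, ← hQF, show (-M) ^ 2 = M ^ 2 from by ring]
  -- upper bound
  have hupper : M ^ 2 / P ≤ Q := by
    have h0 : 0 ≤ ∫ t in a..b, (t - M / P) ^ 2 * phi t := by
      apply intervalIntegral.integral_nonneg hab.le
      intro t _
      have := phi_pos t
      positivity
    rw [expand_integral] at h0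
    rw [← hPdef, ← hMdef, ← hQdef] at h0
    have heq : Q - 2 * (M / P) * M + (M / P) ^ 2 * P = Q - M ^ 2 / P := by
      field_simp
      ring
    rw [heq] at h0
    linarith
  -- lower bound
  have hlower : Q - (b - a) ^ 2 / 4 * P ≤ M ^ 2 / P := by
    have hvar : (∫ t in a..b, (t - (a + b) / 2) ^ 2 * phi t) ≤ (b - a) ^ 2 / 4 * P := by
      have hmono : (∫ t in a..b, (t - (a + b) / 2) ^ 2 * phi t)
          ≤ ∫ t in a..b, (b - a) ^ 2 / 4 * phi t := by
        apply intervalIntegral.integral_mono_on hab.le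
        · exact Continuous.intervalIntegrable (by fun_prop) a b
        · exact Continuous.intervalIntegrable (by fun_prop) a b
        · intro t ht
          have hsq : (t - (a + b) / 2) ^ 2 ≤ ((b - a) / 2) ^ 2 :=
            sq_le_sq' (by linarith [ht.1, ht.2]) (by linarith [ht.1, ht.2])
          have h3 := mul_le_mul_of_nonneg_right hsq (phi_pos t).le
          linarith [h3]
      rw [intervalIntegral.integral_const_mul, ← hPdef] at hmono
      exact hmono
    rw [expand_integral, ← hPdef, ← hMdef, ← hQdef] at hvar
    rw [le_div_iff₀ hP]
    nlinarith [sq_nonneg (M - (a + b) / 2 * P), mul_le_mul_of_nonneg_right hvar hP.le]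
  exact ⟨hlower, hupper⟩

lemma tele_aux (u : ℕ → ℝ) (n : ℕ) :
    ∑ i ∈ Finset.Icc 1 n, (u i - u (i - 1)) = u n - u 0 := by
  induction n with
  | zero => simp
  | succ n ih =>
      rw [Finset.sum_Icc_succ_top (by omega : 1 ≤ n + 1), ih]
      simp

lemma telescope_sum (G : ℝ → ℝ) (c Δ : ℝ) (k : ℕ) (hk : 0 < k) :
    ∑ i ∈ Finset.Icc 1 k,
        (G (c + (2 * (i : ℝ) + 1) * Δ / (2 * (k : ℝ)))
          - G (c + (2 * (i : ℝ) - 1) * Δ / (2 * (k : ℝ))))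
      = G (c + Δ + Δ / (2 * (k : ℝ))) - G (c + Δ / (2 * (k : ℝ))) := by
  have hk' : (k : ℝ) ≠ 0 := Nat.cast_ne_zero.mpr hk.ne'
  have step : ∑ i ∈ Finset.Icc 1 k,
      (G (c + (2 * (i : ℝ) + 1) * Δ / (2 * (k : ℝ)))
        - G (c + (2 * (i : ℝ) - 1) * Δ / (2 * (k : ℝ))))
      = ∑ i ∈ Finset.Icc 1 k,
        ((fun j : ℕ => G (c + (2 * (j : ℝ) + 1) * Δ / (2 * (k : ℝ)))) i
          - (fun j : ℕ => G (c + (2 * (j : ℝ) + 1) * Δ / (2 * (k : ℝ)))) (i - 1)) := by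
    apply Finset.sum_congr rfl
    intro i hi
    have hi1 : 1 ≤ i := (Finset.mem_Icc.mp hi).1
    simp only
    congr 2
    rw [Nat.cast_sub hi1]
    push_cast
    ring
  rw [step, tele_aux]
  simp only [Nat.cast_zero]
  congr 2
  · field_simp
    ring
  · norm_num

/-- The interior Riemann-type series in the quantization analysis converges to
`c·φ(c) − (c+Δ)·φ(c+Δ) + Φ(c+Δ) − Φ(c)`. -/
theorem quantization_series_limit (c Δ : ℝ) (hΔ : 0 < Δ) :
    Tendsto (fun k : ℕ => ∑ i ∈ Finset.Icc 1 k,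
        (phi (c + (2 * (i : ℝ) + 1) * Δ / (2 * (k : ℝ))) -
            phi (c + (2 * (i : ℝ) - 1) * Δ / (2 * (k : ℝ)))) ^ 2 /
          (Phi (c + (2 * (i : ℝ) + 1) * Δ / (2 * (k : ℝ))) -
            Phi (c + (2 * (i : ℝ) - 1) * Δ / (2 * (k : ℝ)))))
      atTop
      (nhds (c * phi c - (c + Δ) * phi (c + Δ) + Phi (c + Δ) - Phi c)) := by
  set F : ℝ → ℝ := fun x => Phi x - x * phi x with hF
  have hFcont : Continuous F := by
    apply continuous_Phi.sub
    fun_prop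
  have hshift : Tendsto (fun k : ℕ => Δ / (2 * (k : ℝ))) atTop (nhds 0) := by
    have h1 : Tendsto (fun k : ℕ => ((k : ℝ))⁻¹) atTop (nhds 0) :=
      tendsto_inv_atTop_zero.comp tendsto_natCast_atTop_atTop
    have h2 := h1.const_mul (Δ / 2)
    rw [mul_zero] at h2
    refine h2.congr fun k => ?_
    rw [div_eq_mul_inv, div_eq_mul_inv, mul_inv]
    ring
  have hx1 : Tendsto (fun k : ℕ => c + Δ / (2 * (k : ℝ))) atTop (nhds c) := by
    simpa using (tendsto_const_nhds.add hshift :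
      Tendsto (fun k : ℕ => c + Δ / (2 * (k : ℝ))) atTop (nhds (c + 0)))
  have hx2 : Tendsto (fun k : ℕ => c + Δ + Δ / (2 * (k : ℝ))) atTop (nhds (c + Δ)) := by
    simpa using (tendsto_const_nhds.add hshift :
      Tendsto (fun k : ℕ => c + Δ + Δ / (2 * (k : ℝ))) atTop (nhds (c + Δ + 0)))
  have hUtend : Tendsto (fun k : ℕ =>
      F (c + Δ + Δ / (2 * (k : ℝ))) - F (c + Δ / (2 * (k : ℝ)))) atTop
      (nhds (F (c + Δ) - F c)) :=
    ((hFcont.tendsto _).comp hx2).sub ((hFcont.tendsto _).comp hx1)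
  have hsq : Tendsto (fun k : ℕ => (Δ / (k : ℝ)) ^ 2 / 4) atTop (nhds 0) := by
    have h1 : Tendsto (fun k : ℕ => Δ / (k : ℝ)) atTop (nhds 0) := by
      have h1' : Tendsto (fun k : ℕ => ((k : ℝ))⁻¹) atTop (nhds 0) :=
        tendsto_inv_atTop_zero.comp tendsto_natCast_atTop_atTop
      have h2 := h1'.const_mul Δ
      rw [mul_zero] at h2
      refine h2.congr fun k => ?_
      rw [div_eq_mul_inv]
    have := ((h1.mul h1).div_const 4)
    simpa [pow_two] using this
  have hPhidiff : Tendsto (fun k : ℕ =>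
      Phi (c + Δ + Δ / (2 * (k : ℝ))) - Phi (c + Δ / (2 * (k : ℝ)))) atTop
      (nhds (Phi (c + Δ) - Phi c)) :=
    ((continuous_Phi.tendsto _).comp hx2).sub ((continuous_Phi.tendsto _).comp hx1)
  have hLtend : Tendsto (fun k : ℕ =>
      F (c + Δ + Δ / (2 * (k : ℝ))) - F (c + Δ / (2 * (k : ℝ)))
        - (Δ / (k : ℝ)) ^ 2 / 4 *
          (Phi (c + Δ + Δ / (2 * (k : ℝ))) - Phi (c + Δ / (2 * (k : ℝ)))))
      atTop (nhds (F (c + Δ) - F c)) := by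
    have := hUtend.sub (hsq.mul hPhidiff)
    simpa using this
  have htarget : c * phi c - (c + Δ) * phi (c + Δ) + Phi (c + Δ) - Phi c
      = F (c + Δ) - F c := by
    simp only [hF]; ring
  rw [htarget]
  apply tendsto_of_tendsto_of_tendsto_of_le_of_le' hLtend hUtend
  · -- lower bound eventually
    filter_upwards [eventually_ge_atTop 1] with k hk
    have hk0 : 0 < k := hk
    have hk' : (0 : ℝ) < (k : ℝ) := Nat.cast_pos.mpr hk0
    have hkne : ((k : ℝ)) ≠ 0 := hk'.ne'
    have hbound : ∀ i ∈ Finset.Icc 1 k,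
        (F (c + (2 * (i : ℝ) + 1) * Δ / (2 * (k : ℝ)))
            - F (c + (2 * (i : ℝ) - 1) * Δ / (2 * (k : ℝ))))
          - (Δ / (k : ℝ)) ^ 2 / 4 *
            (Phi (c + (2 * (i : ℝ) + 1) * Δ / (2 * (k : ℝ)))
              - Phi (c + (2 * (i : ℝ) - 1) * Δ / (2 * (k : ℝ))))
        ≤ (phi (c + (2 * (i : ℝ) + 1) * Δ / (2 * (k : ℝ))) -
            phi (c + (2 * (i : ℝ) - 1) * Δ / (2 * (k : ℝ)))) ^ 2 /
          (Phi (c + (2 * (i : ℝ) + 1) * Δ / (2 * (k : ℝ))) -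
            Phi (c + (2 * (i : ℝ) - 1) * Δ / (2 * (k : ℝ)))) := by
      intro i _
      set a := c + (2 * (i : ℝ) - 1) * Δ / (2 * (k : ℝ)) with ha
      set b := c + (2 * (i : ℝ) + 1) * Δ / (2 * (k : ℝ)) with hb
      have hdiff : b - a = Δ / (k : ℝ) := by
        rw [ha, hb]
        field_simp
        ring
      have hab : a < b := by
        rw [← sub_pos, hdiff]
        positivity
      have h := (term_bounds a b hab).1
      rw [hdiff] at h
      have hFb : F b = Phi b - b * phi b := rfl
      have hFa : F a = Phi a - a * phi a := rfl
      rw [hFb, hFa]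
      linarith
    calc F (c + Δ + Δ / (2 * (k : ℝ))) - F (c + Δ / (2 * (k : ℝ)))
          - (Δ / (k : ℝ)) ^ 2 / 4 *
            (Phi (c + Δ + Δ / (2 * (k : ℝ))) - Phi (c + Δ / (2 * (k : ℝ))))
        = ∑ i ∈ Finset.Icc 1 k,
            ((F (c + (2 * (i : ℝ) + 1) * Δ / (2 * (k : ℝ)))
                - F (c + (2 * (i : ℝ) - 1) * Δ / (2 * (k : ℝ))))
              - (Δ / (k : ℝ)) ^ 2 / 4 *
                (Phi (c + (2 * (i : ℝ) + 1) * Δ / (2 * (k : ℝ)))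
                  - Phi (c + (2 * (i : ℝ) - 1) * Δ / (2 * (k : ℝ))))) := by
          rw [Finset.sum_sub_distrib, ← Finset.mul_sum, telescope_sum F c Δ k hk0,
            telescope_sum Phi c Δ k hk0]
      _ ≤ _ := Finset.sum_le_sum hbound
  · -- upper bound eventually
    filter_upwards [eventually_ge_atTop 1] with k hk
    have hk0 : 0 < k := hk
    have hk' : (0 : ℝ) < (k : ℝ) := Nat.cast_pos.mpr hk0
    have hkne : ((k : ℝ)) ≠ 0 := hk'.ne'
    have hbound : ∀ i ∈ Finset.Icc 1 k,
        (phi (c + (2 * (i : ℝ) + 1) * Δ / (2 * (k : ℝ))) -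
            phi (c + (2 * (i : ℝ) - 1) * Δ / (2 * (k : ℝ)))) ^ 2 /
          (Phi (c + (2 * (i : ℝ) + 1) * Δ / (2 * (k : ℝ))) -
            Phi (c + (2 * (i : ℝ) - 1) * Δ / (2 * (k : ℝ))))
        ≤ F (c + (2 * (i : ℝ) + 1) * Δ / (2 * (k : ℝ)))
            - F (c + (2 * (i : ℝ) - 1) * Δ / (2 * (k : ℝ))) := by
      intro i _
      set a := c + (2 * (i : ℝ) - 1) * Δ / (2 * (k : ℝ)) with ha
      set b := c + (2 * (i : ℝ) + 1) * Δ / (2 * (k : ℝ)) with hb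
      have hdiff : b - a = Δ / (k : ℝ) := by
        rw [ha, hb]
        field_simp
        ring
      have hab : a < b := by
        rw [← sub_pos, hdiff]
        positivity
      have h := (term_bounds a b hab).2
      have hFb : F b = Phi b - b * phi b := rfl
      have hFa : F a = Phi a - a * phi a := rfl
      rw [hFb, hFa]
      linarith
    calc (∑ i ∈ Finset.Icc 1 k,
          (phi (c + (2 * (i : ℝ) + 1) * Δ / (2 * (k : ℝ))) -
              phi (c + (2 * (i : ℝ) - 1) * Δ / (2 * (k : ℝ)))) ^ 2 /
            (Phi (c + (2 * (i : ℝ) + 1) * Δ / (2 * (k : ℝ))) -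
              Phi (c + (2 * (i : ℝ) - 1) * Δ / (2 * (k : ℝ)))))
        ≤ ∑ i ∈ Finset.Icc 1 k,
            (F (c + (2 * (i : ℝ) + 1) * Δ / (2 * (k : ℝ)))
              - F (c + (2 * (i : ℝ) - 1) * Δ / (2 * (k : ℝ)))) :=
          Finset.sum_le_sum hbound
      _ = _ := telescope_sum F c Δ k hk0
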